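/- (Theorem 1.) Let m, d ≥ 1 be integers, ε > 0 and δ ∈ (0,1). Let γ_d = Measure.pi (fun i : Fin d => gaussianReal 0 1) and set p = γ_d {g | (∑ i, (g i)²)^{1/2} ≥ ε}; assume 0 < p < 1 and (m : ℝ) > log δ / log p. Let μ = Measure.pi (fun s : Fin m => Measure.pi (fun i : Fin d => gaussianReal 0 (1/m))) be the law of the hidden-layer weight matrix W¹ with i.i.d. N(0, 1/m) entries. Then with μ-probability greater than 1 − δ over W¹, there exists a row index j : Fin m such that for every output-weight vector w² : Fin m → ℝ with all entries in {−1, 1} and every x : Fin d → ℝ with ‖x‖₂ ≤ 1, one has |∑ s, w² s · max 0 ((W¹ ⬝ x) s) − ∑ s, w² s · max 0 ((Bⱼ W¹ ⬝ x) s)| < ε, where Bⱼ W¹ is W¹ with its j-th row replaced by zeros. -/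

import Mathlib

open Finset MeasureTheory ProbabilityTheory

/-- Product of mapped (by scalar multiplication) standard Gaussians is the map of the product. -/
lemma pi_map_const_mul (d : ℕ) (c : ℝ) :
    (Measure.pi fun _ : Fin d => (gaussianReal 0 1).map (c * ·)) =
      (Measure.pi fun _ : Fin d => gaussianReal 0 1).map (fun g i => c * g i) := by
  have hmeas : Measurable (fun g : Fin d → ℝ => fun i => c * g i) :=
    measurable_pi_lambda _ fun i => by fun_prop
  haveI : SigmaFinite ((gaussianReal 0 1).map (c * ·)) := by
    rw [gaussianReal_map_const_mul]; infer_instance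
  refine (Measure.pi_eq (μ := fun _ : Fin d => (gaussianReal 0 1).map (c * ·))
    fun s hs => ?_)
  rw [Measure.map_apply hmeas (MeasurableSet.univ_pi hs)]
  have hpre : (fun g : Fin d → ℝ => fun i => c * g i) ⁻¹' Set.pi Set.univ s
      = Set.pi Set.univ (fun i => (c * ·) ⁻¹' s i) := by
    ext g; simp [Set.mem_pi]
  rw [hpre, Measure.pi_pi]
  exact Finset.prod_congr rfl fun i _ =>
    (Measure.map_apply (measurable_const_mul c) (hs i)).symm

/-- Theorem 1: with probability greater than `1 - δ` over the hidden-layer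
weights `W¹` with i.i.d. `N(0, 1/m)` entries, there is a hidden neuron `j`
whose removal changes the output of the 1-hidden-layer ReLU network by less
than `ε`, for every choice of `±1` output weights and every input of Euclidean
norm at most `1`. -/
theorem lottery_ticket_one_hidden_layer
    (m d : ℕ) (hm : 1 ≤ m) (hd : 1 ≤ d) (ε δ : ℝ) (hε : 0 < ε)
    (hδ : δ ∈ Set.Ioo (0 : ℝ) 1) (p : ℝ)
    (hp_def : p = ((Measure.pi fun _ : Fin d => gaussianReal 0 1)
        {g : Fin d → ℝ | Real.sqrt (∑ i, (g i) ^ 2) ≥ ε}).toReal)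
    (hp0 : 0 < p) (hp1 : p < 1)
    (hm' : (m : ℝ) > Real.log δ / Real.log p) :
    (Measure.pi fun _ : Fin m => Measure.pi fun _ : Fin d =>
        gaussianReal 0 (1 / (m : NNReal)))
      {W1 : Fin m → Fin d → ℝ |
        ∃ j : Fin m, ∀ w2 : Fin m → ℝ, (∀ s, w2 s = 1 ∨ w2 s = -1) →
          ∀ x : Fin d → ℝ, Real.sqrt (∑ i, (x i) ^ 2) ≤ 1 →
            |(∑ s, w2 s * max 0 (∑ i, W1 s i * x i)) -
              ∑ s, w2 s * max 0 (∑ i, (if s = j then 0 else W1 s i) * x i)| < ε}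
    > ENNReal.ofReal (1 - δ) := by
  have hm0 : (0 : ℝ) < m := by exact_mod_cast hm
  set γ : Measure (Fin d → ℝ) := Measure.pi fun _ : Fin d => gaussianReal 0 1 with hγ
  set ν : Measure (Fin d → ℝ) :=
    Measure.pi fun _ : Fin d => gaussianReal 0 (1 / (m : NNReal)) with hν
  set μ : Measure (Fin m → Fin d → ℝ) := Measure.pi fun _ : Fin m => ν with hμ
  set c : ℝ := Real.sqrt (1 / m) with hc
  have hc0 : 0 ≤ c := Real.sqrt_nonneg _
  have hc1 : c ≤ 1 := by
    have h1 : (1 : ℝ) / m ≤ 1 := by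
      rw [div_le_one hm0]; exact_mod_cast hm
    calc c = Real.sqrt (1 / m) := hc
      _ ≤ Real.sqrt 1 := Real.sqrt_le_sqrt h1
      _ = 1 := Real.sqrt_one
  -- ν is γ mapped by scaling
  have hscale : ν = γ.map (fun g i => c * g i) := by
    rw [hν, hγ, ← pi_map_const_mul]
    congr 1
    funext i
    rw [gaussianReal_map_const_mul]
    congr 1
    · simp
    · ext
      simp [hc, Real.sq_sqrt (le_of_lt (by positivity : (0:ℝ) < 1 / m))]
  -- the bad-row set
  set S : Set (Fin d → ℝ) := {r | ε ≤ Real.sqrt (∑ i, (r i) ^ 2)} with hS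
  have hSmeas : MeasurableSet S := by
    have : Measurable fun r : Fin d → ℝ => Real.sqrt (∑ i, (r i) ^ 2) := by
      fun_prop
    exact measurableSet_le measurable_const this
  -- ν S ≤ ofReal p
  have hνS : ν S ≤ ENNReal.ofReal p := by
    rw [hscale, Measure.map_apply
      (measurable_pi_lambda _ fun i => (measurable_pi_apply i).const_mul c) hSmeas]
    have hsub : (fun g : Fin d → ℝ => fun i => c * g i) ⁻¹' S ⊆ S := by
      intro g hg
      simp only [S, Set.mem_preimage, Set.mem_setOf_eq] at hg ⊢
      refine le_trans hg ?_
      have : ∑ i, (c * g i) ^ 2 = c ^ 2 * ∑ i, (g i) ^ 2 := by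
        rw [Finset.mul_sum]; exact Finset.sum_congr rfl fun i _ => by ring
      rw [this, Real.sqrt_mul (sq_nonneg c), Real.sqrt_sq hc0]
      nlinarith [Real.sqrt_nonneg (∑ i, (g i) ^ 2)]
    refine le_trans (measure_mono hsub) ?_
    have hfin : γ S ≤ 1 := prob_le_one
    rw [hp_def]
    have : γ {g : Fin d → ℝ | Real.sqrt (∑ i, (g i) ^ 2) ≥ ε} = γ S := rfl
    rw [this, ENNReal.ofReal_toReal (lt_of_le_of_lt hfin ENNReal.one_lt_top).ne]
  -- p ^ m < δ
  have hlogp : Real.log p < 0 := Real.log_neg hp0 hp1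
  have hpm : p ^ m < δ := by
    have h1 : (m : ℝ) * Real.log p < Real.log δ := by
      have hm'' : Real.log δ / Real.log p < (m : ℝ) := hm'
      rwa [div_lt_iff_of_neg hlogp] at hm''
    calc p ^ m = Real.exp (Real.log p) ^ m := by rw [Real.exp_log hp0]
      _ = Real.exp ((m : ℝ) * Real.log p) := by rw [← Real.exp_nat_mul]
      _ < Real.exp (Real.log δ) := Real.exp_lt_exp.2 h1
      _ = δ := Real.exp_log hδ.1
  -- good set A
  set A : Set (Fin m → Fin d → ℝ) :=
    {W1 | ∃ j : Fin m, Real.sqrt (∑ i, (W1 j i) ^ 2) < ε} with hA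
  have hAc : Aᶜ = Set.pi Set.univ fun _ : Fin m => S := by
    ext W1
    simp [A, S, Set.mem_pi, not_lt]
  have hAmeas : MeasurableSet A := by
    rw [← compl_compl A, hAc]
    exact (MeasurableSet.univ_pi fun _ => hSmeas).compl
  have hμAc : μ Aᶜ ≤ ENNReal.ofReal (p ^ m) := by
    rw [hAc, hμ, Measure.pi_pi]
    simp only [Finset.prod_const, Finset.card_univ, Fintype.card_fin]
    calc (ν S) ^ m ≤ (ENNReal.ofReal p) ^ m := pow_le_pow_left' hνS m
      _ = ENNReal.ofReal (p ^ m) := (ENNReal.ofReal_pow hp0.le m).symm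
  -- A ⊆ event
  have hsubE : A ⊆ {W1 : Fin m → Fin d → ℝ |
        ∃ j : Fin m, ∀ w2 : Fin m → ℝ, (∀ s, w2 s = 1 ∨ w2 s = -1) →
          ∀ x : Fin d → ℝ, Real.sqrt (∑ i, (x i) ^ 2) ≤ 1 →
            |(∑ s, w2 s * max 0 (∑ i, W1 s i * x i)) -
              ∑ s, w2 s * max 0 (∑ i, (if s = j then 0 else W1 s i) * x i)| < ε} := by
    rintro W1 ⟨j, hj⟩
    refine ⟨j, fun w2 hw2 x hx => ?_⟩
    have hdiff : (∑ s, w2 s * max 0 (∑ i, W1 s i * x i)) -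
        ∑ s, w2 s * max 0 (∑ i, (if s = j then 0 else W1 s i) * x i)
        = w2 j * max 0 (∑ i, W1 j i * x i) := by
      rw [← Finset.sum_sub_distrib]
      rw [Finset.sum_eq_single j]
      · simp
      · intro s _ hs
        simp [hs]
      · simp
    rw [hdiff]
    have habs : |w2 j| = 1 := by rcases hw2 j with h | h <;> simp [h]
    rw [abs_mul, habs, one_mul]
    have h1 : |max 0 (∑ i, W1 j i * x i)| ≤ |∑ i, W1 j i * x i| := by
      rcases le_total (∑ i, W1 j i * x i) 0 with h | h
      · rw [max_eq_left h]; simp [abs_nonneg]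
      · rw [max_eq_right h]
    refine lt_of_le_of_lt h1 ?_
    -- Cauchy-Schwarz
    have hcs : |∑ i, W1 j i * x i| ≤
        Real.sqrt (∑ i, (W1 j i) ^ 2) * Real.sqrt (∑ i, (x i) ^ 2) := by
      have := Finset.sum_mul_sq_le_sq_mul_sq Finset.univ (fun i => W1 j i) x
      have h2 : |∑ i, W1 j i * x i| = Real.sqrt ((∑ i, W1 j i * x i) ^ 2) :=
        (Real.sqrt_sq_eq_abs _).symm
      rw [h2, ← Real.sqrt_mul (Finset.sum_nonneg fun i _ => sq_nonneg _)]
      exact Real.sqrt_le_sqrt this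
    refine lt_of_le_of_lt hcs ?_
    calc Real.sqrt (∑ i, (W1 j i) ^ 2) * Real.sqrt (∑ i, (x i) ^ 2)
        ≤ Real.sqrt (∑ i, (W1 j i) ^ 2) * 1 :=
          mul_le_mul_of_nonneg_left hx (Real.sqrt_nonneg _)
      _ = Real.sqrt (∑ i, (W1 j i) ^ 2) := mul_one _
      _ < ε := hj
  -- put it together
  have hμA : ENNReal.ofReal (1 - δ) < μ A := by
    have hcompl : μ A = 1 - μ Aᶜ := by
      rw [measure_compl hAmeas (measure_ne_top μ A)]
      rw [measure_univ]
      rw [ENNReal.sub_sub_cancel ENNReal.one_ne_top (prob_le_one)]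
    rw [hcompl]
    calc ENNReal.ofReal (1 - δ) < ENNReal.ofReal (1 - p ^ m) := by
          refine (ENNReal.ofReal_lt_ofReal_iff ?_).2 (by linarith)
          have : 0 < p ^ m := pow_pos hp0 m
          linarith [hδ.2]
      _ = 1 - ENNReal.ofReal (p ^ m) := by
          rw [ENNReal.ofReal_sub _ (pow_nonneg hp0.le m), ENNReal.ofReal_one]
      _ ≤ 1 - μ Aᶜ := tsub_le_tsub_left hμAc 1
  exact lt_of_lt_of_le hμA (measure_mono hsubE)
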